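/- Let π be a subset seed of span m over a finite alphabet A with distinguished letter 1, with r = |R_π| and w = m − r, and suppose that 1 ∉ R_π (i.e., π_1 = {1}, as is the case for ordinary spaced seeds). Then the set of all pairs (X,t) with X ⊆ R_π, t ∈ ℕ and max(X ∪ {0}) + t ≤ m − 1 has cardinality at most w·2^r. -/
import Mathlib


/-- The set `R_π` of non-`#` positions of a subset seed `π` of span `m` over an alphabet
with distinguished "match" letter `one`: positions `i ∈ [1..m]` with `π i ≠ {one}`. -/
def Rpi {A : Type*} [DecidableEq A] (m : ℕ) (one : A) (π : ℕ → Finset A) : Finset ℕ :=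
  (Finset.Icc 1 m).filter (fun i => π i ≠ {one})

/-- Transition function `ψ` of the subset seed automaton `S_π`.  States are pairs
`(X, t)` with `X : Finset ℕ` and `t : ℕ`; note that `max (X ∪ {0}) = X.sup id`.
A state is final when `max (X ∪ {0}) + t ≥ m`; final states are fixed.  On a
non-final state `(X, t)`: reading `one` yields `(X, t+1)`; reading `a ≠ one`
yields `(X_U ∪ X_V, 0)` with `X_U = {x ∈ R_π : x ≤ t+1 ∧ a ∈ π x}` and
`X_V = {x+t+1 : x ∈ X, x+t+1 ≤ m, a ∈ π (x+t+1)}`. -/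
def seedStep {A : Type*} [DecidableEq A] (m : ℕ) (one : A) (π : ℕ → Finset A)
    (q : Finset ℕ × ℕ) (a : A) : Finset ℕ × ℕ :=
  if m ≤ q.1.sup id + q.2 then q
  else if a = one then (q.1, q.2 + 1)
  else ((Rpi m one π).filter (fun x => x ≤ q.2 + 1 ∧ a ∈ π x) ∪
        ((q.1.filter (fun x => x + q.2 + 1 ≤ m ∧ a ∈ π (x + q.2 + 1))).image
          (fun x => x + q.2 + 1)), 0)

/-- The extension `ψ*` of the transition function of `S_π` to words,
reading letters left to right from state `q`. -/
def seedRun {A : Type*} [DecidableEq A] (m : ℕ) (one : A) (π : ℕ → Finset A)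
    (q : Finset ℕ × ℕ) : List A → Finset ℕ × ℕ
  | [] => q
  | a :: s => seedRun m one π (seedStep m one π q a) s


lemma sum_sup_bound (m : ℕ) (R : Finset ℕ) (hR : ∀ s ∈ R, 2 ≤ s ∧ s ≤ m) :
    ∑ X ∈ R.powerset, (m - X.sup id) ≤ (m - R.card) * 2 ^ R.card := by
  induction R using Finset.strongInduction with
  | _ R ih =>
    rcases R.eq_empty_or_nonempty with rfl | hne
    · simp
    · set M := R.max' hne with hM
      have hMR : M ∈ R := R.max'_mem hne
      set R' := R.erase M with hR'
      have hMR' : M ∉ R' := Finset.notMem_erase _ _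
      have hins : R = insert M R' := by
        rw [hR', Finset.insert_erase hMR]
      have hcard : R.card = R'.card + 1 := by
        rw [hins, Finset.card_insert_of_notMem hMR']
      have hMm : M ≤ m := (hR M hMR).2
      have hsub : R ⊆ Finset.Icc 2 M := by
        intro s hs
        simp only [Finset.mem_Icc]
        exact ⟨(hR s hs).1, R.le_max' s hs⟩
      have hMcard : R.card + 1 ≤ M := by
        have := Finset.card_le_card hsub
        rw [Nat.card_Icc] at this
        have h2 : 2 ≤ M := (hR M hMR).1
        omega
      have ihR' : ∑ X ∈ R'.powerset, (m - X.sup id) ≤ (m - R'.card) * 2 ^ R'.card :=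
        ih R' (Finset.erase_ssubset hMR) (fun s hs => hR s (Finset.erase_subset _ _ hs))
      have hsplit : ∑ X ∈ R.powerset, (m - X.sup id)
          = ∑ X ∈ R'.powerset, (m - X.sup id)
            + ∑ X ∈ R'.powerset, (m - (insert M X).sup id) := by
        rw [hins, Finset.sum_powerset_insert hMR']
      have hsup : ∀ X ∈ R'.powerset, (insert M X).sup id = M := by
        intro X hX
        rw [Finset.sup_insert]
        have : X.sup id ≤ M := by
          apply Finset.sup_le
          intro b hb
          exact R.le_max' b (Finset.erase_subset _ _ (Finset.mem_powerset.mp hX hb))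
        simpa [id] using this
      have hsnd : ∑ X ∈ R'.powerset, (m - (insert M X).sup id) = (m - M) * 2 ^ R'.card := by
        rw [Finset.sum_congr rfl (fun X hX => by rw [hsup X hX])]
        simp [Finset.card_powerset, mul_comm]
      rw [hsplit, hsnd]
      have key : (m - R'.card) + (m - M) ≤ 2 * (m - R.card) := by omega
      calc ∑ X ∈ R'.powerset, (m - X.sup id) + (m - M) * 2 ^ R'.card
          ≤ (m - R'.card) * 2 ^ R'.card + (m - M) * 2 ^ R'.card :=
            Nat.add_le_add_right ihR' _
        _ = ((m - R'.card) + (m - M)) * 2 ^ R'.card := by ring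
        _ ≤ (2 * (m - R.card)) * 2 ^ R'.card := Nat.mul_le_mul_right _ key
        _ = (m - R.card) * 2 ^ R.card := by rw [hcard]; ring

/-- if `1 ∉ R_π` (i.e. `π_1 = {1}`, as for ordinary spaced seeds), then the set
of all pairs `(X,t)` with `X ⊆ R_π` and `max(X ∪ {0}) + t ≤ m − 1` has cardinality at most
`w·2^r`, where `r = |R_π|` and `w = m − r`. -/
theorem seedAutomaton_number_of_states_of_one_not_mem
    {A : Type*} [DecidableEq A] (m : ℕ) (one : A) (π : ℕ → Finset A)
    (hπ : ∀ i ∈ Finset.Icc 1 m, one ∈ π i)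
    (h1 : 1 ∉ Rpi m one π) :
    (((Rpi m one π).powerset ×ˢ Finset.range m).filter
        (fun q : Finset ℕ × ℕ => q.1.sup id + q.2 + 1 ≤ m)).card
      ≤ (m - (Rpi m one π).card) * 2 ^ (Rpi m one π).card := by
  set R := Rpi m one π with hRdef
  have hcard : (((R.powerset ×ˢ Finset.range m)).filter
        (fun q : Finset ℕ × ℕ => q.1.sup id + q.2 + 1 ≤ m)).card
      = ∑ X ∈ R.powerset, ((Finset.range m).filter (fun t => X.sup id + t + 1 ≤ m)).card := by
    rw [Finset.card_filter, Finset.sum_product]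
    exact Finset.sum_congr rfl (fun X _ => by rw [Finset.card_filter])
  have hinner : ∀ X : Finset ℕ,
      ((Finset.range m).filter (fun t => X.sup id + t + 1 ≤ m)).card = m - X.sup id := by
    intro X
    have : (Finset.range m).filter (fun t => X.sup id + t + 1 ≤ m)
        = Finset.range (m - X.sup id) := by
      ext t
      simp only [Finset.mem_filter, Finset.mem_range]
      omega
    rw [this, Finset.card_range]
  rw [hcard, Finset.sum_congr rfl (fun X _ => hinner X)]
  apply sum_sup_bound
  intro s hs
  rw [hRdef, Rpi, Finset.mem_filter, Finset.mem_Icc] at hs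
  obtain ⟨⟨h1s, hsm⟩, hne⟩ := hs
  have hs1 : s ≠ 1 := by
    intro h
    subst h
    exact h1 (by
      rw [hRdef, Rpi]
      exact Finset.mem_filter.mpr ⟨Finset.mem_Icc.mpr ⟨le_refl 1, hsm⟩, hne⟩)
  exact ⟨by omega, hsm⟩
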